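/- arXiv:2508.02164 — 7 statements merged into one kernel-verified Lean document; each statement's English description precedes it below -/
import Mathlib

section
/- (Proposition 2) Let the buffer be ω = 0 and let (x̂′, ŷ, δ̂, λ̂, x̂) be a fixed point of the DanyRA updates with stepsizes α, β, η, γ > 0 (in particular η > 0 and 0 < γ). Then x̂ = x̂′ and the KKT conditions of the reformulated problem hold: ∇f(x̂) + Aᵀλ̂ = 0, 𝐋λ̂ = 0, δ̂ ⪰ 0, λ̂ ⪰ 0, λ̂ᵀδ̂ = 0, and A x̂ + 𝐋 ŷ + δ̂ − d = 0. -/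
set_option autoImplicit false

open scoped BigOperators

noncomputable section

/-- Block-diagonal action `A x` of the stacked matrix `A = blkdiag(A_1,…,A_n)`. -/
def Amul {n m p : ℕ} (A : Fin n → Matrix (Fin m) (Fin p) ℝ)
    (x : EuclideanSpace ℝ (Fin n × Fin p)) : EuclideanSpace ℝ (Fin n × Fin m) :=
  WithLp.toLp 2 (fun q : Fin n × Fin m => ∑ k : Fin p, A q.1 q.2 k * x (q.1, k))

/-- Action of the transpose `Aᵀ v` of the stacked block-diagonal matrix. -/
def ATmul {n m p : ℕ} (A : Fin n → Matrix (Fin m) (Fin p) ℝ)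
    (v : EuclideanSpace ℝ (Fin n × Fin m)) : EuclideanSpace ℝ (Fin n × Fin p) :=
  WithLp.toLp 2 (fun q : Fin n × Fin p => ∑ j : Fin m, A q.1 j q.2 * v (q.1, j))

/-- Action of `𝐋 = 𝓛 ⊗ I_m` on a stacked vector `u ∈ ℝ^{nm}`. -/
def Lmul {n m : ℕ} (L : Matrix (Fin n) (Fin n) ℝ)
    (u : EuclideanSpace ℝ (Fin n × Fin m)) : EuclideanSpace ℝ (Fin n × Fin m) :=
  WithLp.toLp 2 (fun q : Fin n × Fin m => ∑ l : Fin n, L q.1 l * u (l, q.2))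

/-- The stacked objective `f(x) = ∑ i f_i(x_i)`. -/
def stackF {n p : ℕ} (f : Fin n → EuclideanSpace ℝ (Fin p) → ℝ)
    (x : EuclideanSpace ℝ (Fin n × Fin p)) : ℝ :=
  ∑ i : Fin n, f i (WithLp.toLp 2 (fun k => x (i, k)))

lemma adjAux {n m p : ℕ} (A : Fin n → Matrix (Fin m) (Fin p) ℝ)
    (x : EuclideanSpace ℝ (Fin n × Fin p)) (u : EuclideanSpace ℝ (Fin n × Fin m)) :
    (inner ℝ (Amul A x) u : ℝ) = inner ℝ x (ATmul A u) := by
  simp only [Amul, ATmul, PiLp.inner_apply, RCLike.inner_apply, starRingEnd_apply, star_trivial]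
  rw [Fintype.sum_prod_type, Fintype.sum_prod_type]
  refine Finset.sum_congr rfl fun i _ => ?_
  simp only [Finset.sum_mul, Finset.mul_sum]
  rw [Finset.sum_comm]
  refine Finset.sum_congr rfl fun j _ => Finset.sum_congr rfl fun k _ => by ring

lemma ATmul_subAux {n m p : ℕ} (A : Fin n → Matrix (Fin m) (Fin p) ℝ)
    (u v : EuclideanSpace ℝ (Fin n × Fin m)) :
    ATmul A (u - v) = ATmul A u - ATmul A v := by
  ext q
  simp [ATmul, mul_sub, Finset.sum_sub_distrib]

/-- Proposition 2: with buffer `ω = 0`, any fixed point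
`(x̂′, ŷ, δ̂, λ̂, x̂)` of the DanyRA updates (stepsizes `α, β, η, γ > 0`)
satisfies `x̂ = x̂′` and the KKT conditions of the reformulated problem:
`∇f(x̂) + Aᵀλ̂ = 0`, `𝐋λ̂ = 0`, `δ̂ ⪰ 0`, `λ̂ ⪰ 0`, `λ̂ᵀδ̂ = 0`, and
`A x̂ + 𝐋 ŷ + δ̂ − d = 0`. -/
theorem stmt_3 {n m p : ℕ} (hn : 1 ≤ n) (hpm : m ≤ p)
    (f : Fin n → EuclideanSpace ℝ (Fin p) → ℝ)
    (hdiff : ∀ i, Differentiable ℝ (f i))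
    (hconv : ∀ i, ConvexOn ℝ Set.univ (f i))
    (A : Fin n → Matrix (Fin m) (Fin p) ℝ)
    (hArank : ∀ i, (A i).rank = m)
    (d : EuclideanSpace ℝ (Fin n × Fin m))
    (L : Matrix (Fin n) (Fin n) ℝ)
    (hLsym : L.IsSymm)
    (hLpsd : L.PosSemidef)
    (hLker : ∀ v : Fin n → ℝ, L.mulVec v = 0 ↔ ∃ c : ℝ, v = fun _ => c)
    (α β η γ : ℝ) (hα : 0 < α) (hβ : 0 < β) (hη : 0 < η) (hγ : 0 < γ)
    -- the fixed point, with `gradF` the gradient of the stacked objective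
    (xhat' xhat : EuclideanSpace ℝ (Fin n × Fin p))
    (yhat δhat lamhat : EuclideanSpace ℝ (Fin n × Fin m))
    (gradF : EuclideanSpace ℝ (Fin n × Fin p) → EuclideanSpace ℝ (Fin n × Fin p))
    (hgradF : gradF = gradient (stackF f))
    (zhat : EuclideanSpace ℝ (Fin n × Fin m))
    (hzhat : zhat = Amul A xhat' + Lmul L yhat + δhat)
    -- fixed-point conditions of the DanyRA updates with ω = 0:
    (hfix1 : gradF xhat' + ATmul A (zhat - d + lamhat) = 0)
    (hfix2 : Lmul L (zhat - d + lamhat) = 0)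
    (hfix3 : (fun q => max ((δhat - α • (zhat - d + lamhat)) q) 0) = δhat)
    (hfix4 : zhat - d = η • Amul A (ATmul A lamhat + gradF xhat'))
    (hfix5mem : Amul A xhat =
      Amul A xhat - γ • (Amul A xhat + Lmul L yhat + δhat - d))
    (hfix5min : ∀ x : EuclideanSpace ℝ (Fin n × Fin p),
      Amul A x = Amul A xhat - γ • (Amul A xhat + Lmul L yhat + δhat - d) →
      ‖xhat - xhat'‖ ≤ ‖x - xhat'‖) :
    xhat = xhat' ∧
    gradF xhat + ATmul A lamhat = 0 ∧
    Lmul L lamhat = 0 ∧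
    (∀ q, 0 ≤ δhat q) ∧
    (∀ q, 0 ≤ lamhat q) ∧
    (inner ℝ lamhat δhat : ℝ) = 0 ∧
    Amul A xhat + Lmul L yhat + δhat - d = 0 := by
  -- additive decomposition of ATmul
  have hATadd : ∀ u v : EuclideanSpace ℝ (Fin n × Fin m),
      ATmul A (u + v) = ATmul A u + ATmul A v := by
    intro u v
    ext q
    simp [ATmul, mul_add, Finset.sum_add_distrib]
  have hgrad : gradF xhat' = - ATmul A (zhat - d + lamhat) :=
    eq_neg_of_add_eq_zero_left hfix1
  have hkey : ATmul A lamhat + gradF xhat' = - ATmul A (zhat - d) := by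
    rw [hgrad]
    have h1 : zhat - d + lamhat = (zhat - d) + lamhat := rfl
    rw [h1, hATadd]
    abel
  set s : EuclideanSpace ℝ (Fin n × Fin m) := zhat - d with hs
  have hs4 : s = η • Amul A (- ATmul A s) := by rw [← hkey]; exact hfix4
  have hAmulneg : ∀ v, Amul A (- v) = - Amul A v := by
    intro v
    ext q
    simp [Amul, Finset.sum_neg_distrib]
  have hzero : s = 0 := by
    have hip : (inner ℝ s s : ℝ) = inner ℝ s (η • Amul A (- ATmul A s)) := by
      rw [← hs4]
    rw [real_inner_smul_right, hAmulneg, inner_neg_right] at hip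
    rw [real_inner_comm (Amul A (ATmul A s)) s, adjAux] at hip
    have h1 : (0:ℝ) ≤ inner ℝ s s := real_inner_self_nonneg
    have h2 : (0:ℝ) ≤ (inner ℝ (ATmul A s) (ATmul A s) : ℝ) := real_inner_self_nonneg
    have h3 : (inner ℝ s s : ℝ) = 0 := by nlinarith
    exact inner_self_eq_zero.mp h3
  have hzd : zhat = d := by
    rw [hs] at hzero; exact sub_eq_zero.mp hzero
  have hw : zhat - d + lamhat = lamhat := by rw [hzd, sub_self, zero_add]
  have hE : Amul A xhat + Lmul L yhat + δhat - d = 0 := by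
    have h : γ • (Amul A xhat + Lmul L yhat + δhat - d) = 0 :=
      sub_eq_self.mp hfix5mem.symm
    rcases smul_eq_zero.mp h with h' | h'
    · exact absurd h' (ne_of_gt hγ)
    · exact h'
  have hE' : Amul A xhat' + Lmul L yhat + δhat - d = 0 := by
    rw [← hzhat, hzd]; exact sub_self d
  have hAeq : Amul A xhat' = Amul A xhat := by
    have h2 : Amul A xhat' - Amul A xhat =
        (Amul A xhat' + Lmul L yhat + δhat - d) -
        (Amul A xhat + Lmul L yhat + δhat - d) := by abel
    rw [hE, hE', sub_zero] at h2
    exact sub_eq_zero.mp h2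
  have hxx : xhat = xhat' := by
    have hfeas : Amul A xhat' =
        Amul A xhat - γ • (Amul A xhat + Lmul L yhat + δhat - d) := by
      rw [hE, smul_zero, sub_zero, hAeq]
    have h := hfix5min xhat' hfeas
    rw [sub_self, norm_zero] at h
    have h0 : ‖xhat - xhat'‖ = 0 := le_antisymm h (norm_nonneg _)
    exact sub_eq_zero.mp (norm_eq_zero.mp h0)
  have hstat : gradF xhat + ATmul A lamhat = 0 := by
    rw [hxx]
    rw [hw] at hfix1
    exact hfix1
  have hL : Lmul L lamhat = 0 := by rw [hw] at hfix2; exact hfix2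
  rw [hw] at hfix3
  have hcomp : ∀ q, max (δhat q - α * lamhat q) 0 = δhat q := by
    intro q
    have h := congrFun hfix3 q
    simpa [PiLp.sub_apply, PiLp.smul_apply, smul_eq_mul] using h
  have hδ : ∀ q, 0 ≤ δhat q := fun q => (le_max_right _ 0).trans_eq (hcomp q)
  have hlam : ∀ q, 0 ≤ lamhat q := by
    intro q
    have h := (le_max_left (δhat q - α * lamhat q) 0).trans_eq (hcomp q)
    have h2 : 0 ≤ α * lamhat q := by linarith
    exact nonneg_of_mul_nonneg_right h2 hα
  have hprod : ∀ q, lamhat q * δhat q = 0 := by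
    intro q
    rcases eq_or_lt_of_le (hδ q) with h0 | h0
    · rw [← h0, mul_zero]
    · have hq := hcomp q
      have hmax : max (δhat q - α * lamhat q) 0 = δhat q - α * lamhat q := by
        rcases le_or_gt (δhat q - α * lamhat q) 0 with h | h
        · rw [max_eq_right h] at hq; linarith
        · exact max_eq_left h.le
      rw [hmax] at hq
      have hακ : α * lamhat q = 0 := by linarith
      have hl0 : lamhat q = 0 :=
        (mul_eq_zero.mp hακ).resolve_left (ne_of_gt hα)
      rw [hl0, zero_mul]
  have hinner : (inner ℝ lamhat δhat : ℝ) = 0 := by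
    simp only [PiLp.inner_apply, RCLike.inner_apply, starRingEnd_apply, star_trivial]
    exact Finset.sum_eq_zero fun q _ => (mul_comm _ _).trans (hprod q)
  exact ⟨hxx, hstat, hL, hδ, hlam, hinner, hE⟩
end
end

section
/- (Proposition 3, feasibility part) Let the buffer be ω > 0 and let (x̂′, ŷ, δ̂, λ̂, x̂) be a fixed point of the DanyRA updates with stepsizes α, β, η, γ > 0. Then x̂ = x̂′, λ̂ ⪰ 0, δ̂ ⪰ ω·1, λ̂ᵀ(δ̂ − ω·1) = 0, ∇f(x̂) + Aᵀλ̂ = 0, 𝐋λ̂ = 0, A x̂ + 𝐋 ŷ + δ̂ − d = 0, and consequently x̂ is feasible for the DRAP: Σ_{i=1}^n A_i x̂_i ⪯ Σ_{i=1}^n d_i componentwise. -/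
set_option autoImplicit false

open scoped BigOperators

noncomputable section

/-- The constant stacked vector `ω·1 ∈ ℝ^{nm}`. -/
def constVec {n m : ℕ} (ω : ℝ) : EuclideanSpace ℝ (Fin n × Fin m) := WithLp.toLp 2 (fun _ => ω)

/-- Additivity of `ATmul`. -/
lemma ATmul_add' {n m p : ℕ} (A : Fin n → Matrix (Fin m) (Fin p) ℝ)
    (v w : EuclideanSpace ℝ (Fin n × Fin m)) :
    ATmul A (v + w) = ATmul A v + ATmul A w := by
  ext q
  simp [ATmul, mul_add, Finset.sum_add_distrib]

/-- `Amul` of a negation. -/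
lemma Amul_neg' {n m p : ℕ} (A : Fin n → Matrix (Fin m) (Fin p) ℝ)
    (v : EuclideanSpace ℝ (Fin n × Fin p)) :
    Amul A (-v) = -(Amul A v) := by
  ext q
  simp [Amul, Finset.sum_neg_distrib]

/-- Adjoint identity for the block-diagonal matrix action. -/
lemma Amul_adjoint' {n m p : ℕ} (A : Fin n → Matrix (Fin m) (Fin p) ℝ)
    (v : EuclideanSpace ℝ (Fin n × Fin p)) (w : EuclideanSpace ℝ (Fin n × Fin m)) :
    ∑ q : Fin n × Fin m, Amul A v q * w q = ∑ q : Fin n × Fin p, v q * ATmul A w q := by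
  simp only [Amul, ATmul, PiLp.toLp_apply, Finset.sum_mul, Finset.mul_sum]
  rw [Fintype.sum_prod_type, Fintype.sum_prod_type]
  refine Finset.sum_congr rfl fun i _ => ?_
  rw [Finset.sum_comm]
  exact Finset.sum_congr rfl fun k _ => Finset.sum_congr rfl fun j _ => by ring

/-- Proposition 3, feasibility part: with buffer `ω > 0`, any
fixed point `(x̂′, ŷ, δ̂, λ̂, x̂)` of the DanyRA updates satisfies `x̂ = x̂′`,
`λ̂ ⪰ 0`, `δ̂ ⪰ ω·1`, `λ̂ᵀ(δ̂ − ω·1) = 0`, `∇f(x̂) + Aᵀλ̂ = 0`, `𝐋λ̂ = 0`,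
`A x̂ + 𝐋 ŷ + δ̂ − d = 0`, and consequently `x̂` is feasible for the DRAP:
`∑ᵢ Aᵢ x̂ᵢ ⪯ ∑ᵢ dᵢ` componentwise. -/
theorem stmt_4 {n m p : ℕ} (hn : 1 ≤ n) (hpm : m ≤ p)
    (f : Fin n → EuclideanSpace ℝ (Fin p) → ℝ)
    (hdiff : ∀ i, Differentiable ℝ (f i))
    (hconv : ∀ i, ConvexOn ℝ Set.univ (f i))
    (A : Fin n → Matrix (Fin m) (Fin p) ℝ)
    (hArank : ∀ i, (A i).rank = m)
    (d : EuclideanSpace ℝ (Fin n × Fin m))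
    (L : Matrix (Fin n) (Fin n) ℝ)
    (hLsym : L.IsSymm)
    (hLpsd : L.PosSemidef)
    (hLker : ∀ v : Fin n → ℝ, L.mulVec v = 0 ↔ ∃ c : ℝ, v = fun _ => c)
    (ω α β η γ : ℝ) (hω : 0 < ω)
    (hα : 0 < α) (hβ : 0 < β) (hη : 0 < η) (hγ : 0 < γ)
    -- the fixed point, with `gradF` the gradient of the stacked objective
    (xhat' xhat : EuclideanSpace ℝ (Fin n × Fin p))
    (yhat δhat lamhat : EuclideanSpace ℝ (Fin n × Fin m))
    (gradF : EuclideanSpace ℝ (Fin n × Fin p) → EuclideanSpace ℝ (Fin n × Fin p))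
    (hgradF : gradF = gradient (stackF f))
    (zhat : EuclideanSpace ℝ (Fin n × Fin m))
    (hzhat : zhat = Amul A xhat' + Lmul L yhat + δhat)
    -- fixed-point conditions of the DanyRA updates with buffer ω:
    (hfix1 : gradF xhat' + ATmul A (zhat - d + lamhat) = 0)
    (hfix2 : Lmul L (zhat - d + lamhat) = 0)
    (hfix3 : (fun q => max ((δhat - α • (zhat - d + lamhat)) q) ω) = δhat)
    (hfix4 : zhat - d = η • Amul A (ATmul A lamhat + gradF xhat'))
    (hfix5mem : Amul A xhat =
      Amul A xhat - γ • (Amul A xhat + Lmul L yhat + δhat - d))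
    (hfix5min : ∀ x : EuclideanSpace ℝ (Fin n × Fin p),
      Amul A x = Amul A xhat - γ • (Amul A xhat + Lmul L yhat + δhat - d) →
      ‖xhat - xhat'‖ ≤ ‖x - xhat'‖) :
    xhat = xhat' ∧
    (∀ q, 0 ≤ lamhat q) ∧
    (∀ q, ω ≤ δhat q) ∧
    (inner ℝ lamhat (δhat - constVec ω) : ℝ) = 0 ∧
    gradF xhat + ATmul A lamhat = 0 ∧
    Lmul L lamhat = 0 ∧
    Amul A xhat + Lmul L yhat + δhat - d = 0 ∧
    (∀ j : Fin m, (∑ i : Fin n, Amul A xhat (i, j)) ≤ ∑ i : Fin n, d (i, j)) := by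
  -- abbreviate the "slack" vector
  set u : EuclideanSpace ℝ (Fin n × Fin m) := zhat - d with hu
  -- Step 1: show u = zhat - d = 0
  have hATsum : ATmul A (u + lamhat) = ATmul A u + ATmul A lamhat := ATmul_add' A u lamhat
  have h1 : gradF xhat' = -(ATmul A u) - ATmul A lamhat := by
    have := hfix1
    rw [hATsum] at this
    have h' : gradF xhat' + (ATmul A u + ATmul A lamhat) = 0 := this
    linear_combination (norm := abel_nf) h'
  have hukey : u = η • Amul A (-(ATmul A u)) := by
    have h2 : ATmul A lamhat + gradF xhat' = -(ATmul A u) := by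
      rw [h1]; abel
    exact hfix4.trans (by rw [h2])
  have hinner_nonneg : (0:ℝ) ≤ ∑ q : Fin n × Fin p, ATmul A u q * ATmul A u q :=
    Finset.sum_nonneg fun q _ => mul_self_nonneg _
  have hself : (inner ℝ u u : ℝ) = -(η * ∑ q : Fin n × Fin p, ATmul A u q * ATmul A u q) := by
    have : (inner ℝ u u : ℝ) = ∑ q : Fin n × Fin m, u q * u q := by
      rw [PiLp.inner_apply]; simp [RCLike.inner_apply, mul_comm, sq]
    rw [this]
    have hpt : ∀ q : Fin n × Fin m, u q = η * (-(Amul A (ATmul A u)) q) := by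
      intro q
      have := congrArg (fun v => v q) hukey
      rw [Amul_neg' A (ATmul A u)] at this
      simpa using this
    calc ∑ q : Fin n × Fin m, u q * u q
        = ∑ q : Fin n × Fin m, (η * (-(Amul A (ATmul A u)) q)) * u q := by
          refine Finset.sum_congr rfl fun q _ => ?_
          rw [← hpt q]
      _ = -(η * ∑ q : Fin n × Fin m, Amul A (ATmul A u) q * u q) := by
          rw [Finset.mul_sum, ← Finset.sum_neg_distrib]
          exact Finset.sum_congr rfl fun q _ => by ring
      _ = -(η * ∑ q : Fin n × Fin p, ATmul A u q * ATmul A u q) := by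
          rw [Amul_adjoint' A (ATmul A u) u]
  have hu0 : u = 0 := by
    have hle : (inner ℝ u u : ℝ) ≤ 0 := by
      rw [hself]
      have : 0 ≤ η * ∑ q : Fin n × Fin p, ATmul A u q * ATmul A u q :=
        mul_nonneg hη.le hinner_nonneg
      linarith
    have hge : (0:ℝ) ≤ inner ℝ u u := real_inner_self_nonneg
    have : (inner ℝ u u : ℝ) = 0 := le_antisymm hle hge
    exact inner_self_eq_zero.mp this
  have hz : zhat = d := by
    have := hu0
    rw [hu] at this
    exact sub_eq_zero.mp this
  have hw : zhat - d + lamhat = lamhat := by rw [hz, sub_self, zero_add]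
  -- Step 2: componentwise facts from hfix3
  have h3 : ∀ q, max (δhat q - α * lamhat q) ω = δhat q := by
    intro q
    have := congrFun hfix3 q
    rw [hw] at this
    simpa using this
  have hlam : ∀ q, 0 ≤ lamhat q := by
    intro q
    have h := h3 q
    have h' := le_max_left (δhat q - α * lamhat q) ω
    rw [h] at h'
    nlinarith
  have hδ : ∀ q, ω ≤ δhat q := by
    intro q
    have h' := le_max_right (δhat q - α * lamhat q) ω
    rw [h3 q] at h'
    exact h' 
  have hcomp : ∀ q, lamhat q * (δhat q - ω) = 0 := by
    intro q
    have h := h3 q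
    rcases max_choice (δhat q - α * lamhat q) ω with hc | hc
    · have heq : δhat q - α * lamhat q = δhat q := hc.symm.trans h
      have hl0 : lamhat q = 0 := by
        have : α * lamhat q = 0 := by linarith
        exact (mul_eq_zero.mp this).resolve_left (ne_of_gt hα)
      rw [hl0, zero_mul]
    · have heq : ω = δhat q := hc.symm.trans h
      rw [← heq, sub_self, mul_zero]
  -- Step 3: the equality at x̂
  have hE : Amul A xhat + Lmul L yhat + δhat - d = 0 := by
    have h := hfix5mem
    have h' : γ • (Amul A xhat + Lmul L yhat + δhat - d) = 0 := by
      have := sub_eq_self.mp h.symm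
      exact this
    rcases smul_eq_zero.mp h' with hc | hc
    · exact absurd hc (ne_of_gt hγ)
    · exact hc
  have hE' : Amul A xhat' + Lmul L yhat + δhat - d = 0 := by
    rw [← hzhat]
    rw [hz, sub_self]
  -- Step 4: x̂ = x̂′
  have hAx : Amul A xhat = Amul A xhat' := by
    have h := hE.trans hE'.symm
    ext q
    have := congrArg (fun v => v q) h
    simp only [PiLp.sub_apply, PiLp.add_apply] at this
    linarith
  have hxx : xhat = xhat' := by
    have hcons : Amul A xhat' =
        Amul A xhat - γ • (Amul A xhat + Lmul L yhat + δhat - d) := by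
      rw [hE, smul_zero, sub_zero, hAx]
    have h5 := hfix5min xhat' hcons
    rw [sub_self, norm_zero] at h5
    have : ‖xhat - xhat'‖ = 0 := le_antisymm h5 (norm_nonneg _)
    have := norm_eq_zero.mp this
    exact sub_eq_zero.mp this
  -- assemble
  refine ⟨hxx, hlam, hδ, ?_, ?_, ?_, hE, ?_⟩
  · have : (inner ℝ lamhat (δhat - constVec ω) : ℝ)
        = ∑ q : Fin n × Fin m, lamhat q * (δhat q - ω) := by
      simp [PiLp.inner_apply, RCLike.inner_apply, constVec, mul_comm]
    rw [this]
    exact Finset.sum_eq_zero fun q _ => hcomp q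
  · rw [hxx]
    rw [hw] at hfix1
    exact hfix1
  · rw [hw] at hfix2
    exact hfix2
  · -- feasibility
    intro j
    have hpt : ∀ i : Fin n, Amul A xhat (i, j)
        = d (i, j) - Lmul L yhat (i, j) - δhat (i, j) := by
      intro i
      have := congrArg (fun v => v (i, j)) hE
      simp only [PiLp.sub_apply, PiLp.add_apply, PiLp.zero_apply] at this
      linarith
    have hLy : ∑ i : Fin n, Lmul L yhat (i, j) = 0 := by
      have hcol : ∀ l : Fin n, ∑ i : Fin n, L i l = 0 := by
        intro l
        have h1 : L.mulVec (fun _ => (1:ℝ)) = 0 := (hLker _).mpr ⟨1, rfl⟩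
        have h2 := congrFun h1 l
        simp only [Matrix.mulVec, dotProduct, mul_one, Pi.zero_apply] at h2
        calc ∑ i : Fin n, L i l = ∑ i : Fin n, L l i :=
              Finset.sum_congr rfl fun i _ => (hLsym.apply l i)
          _ = 0 := h2
      calc ∑ i : Fin n, Lmul L yhat (i, j)
          = ∑ i : Fin n, ∑ l : Fin n, L i l * yhat (l, j) := rfl
        _ = ∑ l : Fin n, (∑ i : Fin n, L i l) * yhat (l, j) := by
            rw [Finset.sum_comm]
            exact Finset.sum_congr rfl fun l _ => (Finset.sum_mul _ _ _).symm
        _ = 0 := Finset.sum_eq_zero fun l _ => by rw [hcol l, zero_mul]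
    have hδsum : 0 ≤ ∑ i : Fin n, δhat (i, j) :=
      Finset.sum_nonneg fun i _ => le_trans hω.le (hδ (i, j))
    calc ∑ i : Fin n, Amul A xhat (i, j)
        = ∑ i : Fin n, (d (i, j) - Lmul L yhat (i, j) - δhat (i, j)) :=
          Finset.sum_congr rfl fun i _ => hpt i
      _ = ∑ i : Fin n, d (i, j) - ∑ i : Fin n, Lmul L yhat (i, j)
            - ∑ i : Fin n, δhat (i, j) := by
          rw [Finset.sum_sub_distrib, Finset.sum_sub_distrib]
      _ ≤ ∑ i : Fin n, d (i, j) := by rw [hLy]; linarith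
end
end

section
/- (Aggregate contraction identity, key step of Theorem 1) Consider any sequences x_k ∈ ℝ^{np}, δ_k, y_k ∈ ℝ^{nm} such that for every k ≥ 0, A x_{k+1} = A x_k − γ(A x_k + 𝐋 y_{k+1} + δ_{k+1} − d) + (1−γ)(δ_k − δ_{k+1}) (the affine constraint of the DanyRA decision update), where γ ∈ (0,1). Then for all k ≥ 0, Σ_{i=1}^n (A_i x_{i,k+1} + δ_{i,k+1} − d_i) = (1−γ) · Σ_{i=1}^n (A_i x_{i,k} + δ_{i,k} − d_i) in ℝ^m. -/
set_option autoImplicit false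

open scoped BigOperators

noncomputable section

/-- aggregate contraction identity: if the sequences satisfy the
affine constraint of the DanyRA decision update
`A x_{k+1} = A x_k − γ(A x_k + 𝐋 y_{k+1} + δ_{k+1} − d) + (1−γ)(δ_k − δ_{k+1})`
with `γ ∈ (0,1)`, then for all `k`,
`∑ᵢ (Aᵢ x_{i,k+1} + δ_{i,k+1} − dᵢ) = (1−γ)·∑ᵢ (Aᵢ x_{i,k} + δ_{i,k} − dᵢ)`. -/
theorem stmt_6 {n m p : ℕ} (hn : 1 ≤ n)
    (A : Fin n → Matrix (Fin m) (Fin p) ℝ)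
    (d : EuclideanSpace ℝ (Fin n × Fin m))
    (L : Matrix (Fin n) (Fin n) ℝ)
    (hLsym : L.IsSymm)
    (hLrow : ∀ i, ∑ j, L i j = 0)
    (hLcol : ∀ j, ∑ i, L i j = 0)
    (γ : ℝ) (hγ0 : 0 < γ) (hγ1 : γ < 1)
    (x : ℕ → EuclideanSpace ℝ (Fin n × Fin p))
    (y δ : ℕ → EuclideanSpace ℝ (Fin n × Fin m))
    (hrec : ∀ k : ℕ, Amul A (x (k + 1)) =
      Amul A (x k) - γ • (Amul A (x k) + Lmul L (y (k + 1)) + δ (k + 1) - d)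
        + (1 - γ) • (δ k - δ (k + 1))) :
    ∀ (k : ℕ) (j : Fin m),
      (∑ i : Fin n, (Amul A (x (k + 1)) (i, j) + δ (k + 1) (i, j) - d (i, j)))
        = (1 - γ) * ∑ i : Fin n, (Amul A (x k) (i, j) + δ k (i, j) - d (i, j)) := by
  intro k j
  have hL0 : ∑ i : Fin n, Lmul L (y (k + 1)) (i, j) = 0 := by
    simp only [Lmul, PiLp.toLp_apply]
    rw [Finset.sum_comm]
    simp [← Finset.sum_mul, hLcol]
  have hpt : ∀ i : Fin n, Amul A (x (k + 1)) (i, j) =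
      Amul A (x k) (i, j) - γ * (Amul A (x k) (i, j) + Lmul L (y (k + 1)) (i, j)
        + δ (k + 1) (i, j) - d (i, j))
        + (1 - γ) * (δ k (i, j) - δ (k + 1) (i, j)) := by
    intro i
    have := congrArg (fun v => v (i, j)) (hrec k)
    simpa [PiLp.add_apply, PiLp.sub_apply, PiLp.smul_apply, smul_eq_mul] using this
  calc ∑ i : Fin n, (Amul A (x (k + 1)) (i, j) + δ (k + 1) (i, j) - d (i, j))
      = ∑ i : Fin n, ((1 - γ) * (Amul A (x k) (i, j) + δ k (i, j) - d (i, j))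
          - γ * Lmul L (y (k + 1)) (i, j)) := by
        refine Finset.sum_congr rfl fun i _ => ?_
        rw [hpt i]; ring
    _ = (1 - γ) * ∑ i : Fin n, (Amul A (x k) (i, j) + δ k (i, j) - d (i, j)) := by
        rw [Finset.sum_sub_distrib, ← Finset.mul_sum, ← Finset.mul_sum, hL0]
        ring
end
end

section
/- (Theorem 1, part iii) Let γ ∈ (0,1) and ω ≥ 0. Consider sequences x_k ∈ ℝ^{np}, δ_k, y_k ∈ ℝ^{nm} satisfying, for every k ≥ 0, A x_{k+1} = A x_k − γ(A x_k + 𝐋 y_{k+1} + δ_{k+1} − d) + (1−γ)(δ_k − δ_{k+1}), and δ_k ⪰ ω·1 for all k ≥ 1 (as is automatic for DanyRA's δ-update with buffer ω). If at some k₀ ≥ 1 one has Σ_{i=1}^n (A_i x_{i,k₀} + δ_{i,k₀} − d_i) ⪯ (nω/(1−γ))·1_m componentwise, then the coupled constraint remains satisfied thereafter: Σ_{i=1}^n A_i x_{i,k₀+t} ⪯ Σ_{i=1}^n d_i componentwise for all t ≥ 1. -/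
set_option autoImplicit false

open scoped BigOperators

noncomputable section

/-- Theorem 1, part iii: for `γ ∈ (0,1)`, `ω ≥ 0`, sequences
satisfying the DanyRA decision-update constraint and `δ_k ⪰ ω·1` for `k ≥ 1`,
if `∑ᵢ (Aᵢ x_{i,k₀} + δ_{i,k₀} − dᵢ) ⪯ (nω/(1−γ))·1` at some `k₀ ≥ 1`, then
`∑ᵢ Aᵢ x_{i,k₀+t} ⪯ ∑ᵢ dᵢ` componentwise for all `t ≥ 1`. -/
theorem stmt_7 {n m p : ℕ} (hn : 1 ≤ n)
    (A : Fin n → Matrix (Fin m) (Fin p) ℝ)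
    (d : EuclideanSpace ℝ (Fin n × Fin m))
    (L : Matrix (Fin n) (Fin n) ℝ)
    (hLsym : L.IsSymm)
    (hLrow : ∀ i, ∑ j, L i j = 0)
    (hLcol : ∀ j, ∑ i, L i j = 0)
    (γ ω : ℝ) (hγ0 : 0 < γ) (hγ1 : γ < 1) (hω : 0 ≤ ω)
    (x : ℕ → EuclideanSpace ℝ (Fin n × Fin p))
    (y δ : ℕ → EuclideanSpace ℝ (Fin n × Fin m))
    (hrec : ∀ k : ℕ, Amul A (x (k + 1)) =
      Amul A (x k) - γ • (Amul A (x k) + Lmul L (y (k + 1)) + δ (k + 1) - d)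
        + (1 - γ) • (δ k - δ (k + 1)))
    (hδω : ∀ k : ℕ, 1 ≤ k → ∀ q, ω ≤ δ k q)
    (k₀ : ℕ) (hk₀ : 1 ≤ k₀)
    (hsmall : ∀ j : Fin m,
      (∑ i : Fin n, (Amul A (x k₀) (i, j) + δ k₀ (i, j) - d (i, j)))
        ≤ n * ω / (1 - γ)) :
    ∀ t : ℕ, 1 ≤ t → ∀ j : Fin m,
      (∑ i : Fin n, Amul A (x (k₀ + t)) (i, j)) ≤ ∑ i : Fin n, d (i, j) := by

  set c := 1 - γ with hc
  have hc0 : 0 < c := by simp [hc]; linarith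
  have hc1 : c ≤ 1 := by simp [hc]; linarith
  -- pointwise recursion
  have hpt : ∀ k (i : Fin n) (j : Fin m), Amul A (x (k+1)) (i,j) =
      Amul A (x k) (i,j) - γ * (Amul A (x k) (i,j) + Lmul L (y (k+1)) (i,j)
        + δ (k+1) (i,j) - d (i,j)) + (1 - γ) * (δ k (i,j) - δ (k+1) (i,j)) := by
    intro k i j
    have h := congrArg (fun v => v (i,j)) (hrec k)
    simpa [PiLp.add_apply, PiLp.sub_apply, PiLp.smul_apply, smul_eq_mul] using h
  -- Laplacian column sums vanish
  have hL0 : ∀ u : EuclideanSpace ℝ (Fin n × Fin m), ∀ j : Fin m,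
      ∑ i : Fin n, Lmul L u (i, j) = 0 := by
    intro u j
    simp only [Lmul, PiLp.toLp_apply]
    rw [Finset.sum_comm]
    have : ∀ l : Fin n, ∑ i : Fin n, L i l * u (l, j) = 0 := by
      intro l
      rw [← Finset.sum_mul, hLcol l, zero_mul]
    simp [this]
  -- the contraction for the "slack" sum
  set s : ℕ → Fin m → ℝ :=
    fun k j => ∑ i : Fin n, (Amul A (x k) (i, j) + δ k (i, j) - d (i, j)) with hs
  have key : ∀ k j, s (k+1) j = c * s k j := by
    intro k j
    have : s (k+1) j = ∑ i : Fin n,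
        (c * (Amul A (x k) (i,j) + δ k (i,j) - d (i,j)) - γ * Lmul L (y (k+1)) (i,j)) := by
      refine Finset.sum_congr rfl fun i _ => ?_
      rw [hpt k i j, hc]; ring
    rw [this, Finset.sum_sub_distrib, ← Finset.mul_sum, ← Finset.mul_sum,
      hL0 (y (k+1)) j, mul_zero, sub_zero, hs]
  have hpow : ∀ t j, s (k₀ + t) j = c ^ t * s k₀ j := by
    intro t j
    induction t with
    | zero => simp
    | succ t ih => rw [← Nat.add_assoc, key, ih, pow_succ]; ring
  intro t ht j
  obtain ⟨u, rfl⟩ : ∃ u, t = u + 1 := ⟨t - 1, by omega⟩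
  have hδsum : (n : ℝ) * ω ≤ ∑ i : Fin n, δ (k₀ + (u+1)) (i, j) := by
    have : ∑ i : Fin n, ω ≤ ∑ i : Fin n, δ (k₀ + (u+1)) (i, j) :=
      Finset.sum_le_sum fun i _ => hδω _ (by omega) (i, j)
    simpa using this
  have hsbound : s (k₀ + (u+1)) j ≤ (n : ℝ) * ω := by
    rw [hpow]
    have h1 : c ^ (u+1) * s k₀ j ≤ c ^ (u+1) * ((n:ℝ) * ω / c) :=
      mul_le_mul_of_nonneg_left (hsmall j) (by positivity)
    have h2 : c ^ (u+1) * ((n:ℝ) * ω / c) = c ^ u * ((n:ℝ) * ω) := by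
      field_simp [pow_succ]; ring
    have h3 : c ^ u * ((n:ℝ) * ω) ≤ 1 * ((n:ℝ) * ω) := by
      apply mul_le_mul_of_nonneg_right (pow_le_one₀ (le_of_lt hc0) hc1)
      positivity
    linarith
  have hexp : s (k₀ + (u+1)) j = (∑ i : Fin n, Amul A (x (k₀+(u+1))) (i, j))
      + (∑ i : Fin n, δ (k₀+(u+1)) (i, j)) - ∑ i : Fin n, d (i, j) := by
    show (∑ i : Fin n, (Amul A (x (k₀+(u+1))) (i, j) + δ (k₀+(u+1)) (i, j) - d (i, j))) = _
    rw [Finset.sum_sub_distrib, Finset.sum_add_distrib]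
  linarith [hsbound, hδsum, hexp.symm.le, hexp.le]
end
end

section
/- (Theorem 2, part ii) Let γ ∈ (0,1) and let ω_k > 0 be buffers satisfying ω_{k+1} ≥ (1−γ)ω_k for all k. Consider sequences x_k ∈ ℝ^{np}, δ_k, y_k ∈ ℝ^{nm} satisfying, for every k ≥ 0, A x_{k+1} = A x_k − γ(A x_k + 𝐋 y_{k+1} + δ_{k+1} − d) + (1−γ)(δ_k − δ_{k+1}), and δ_{k+1} ⪰ ω_k·1 for all k ≥ 0. Suppose the coupled constraint is violated at some k₀ ≥ 1 and let C ∈ ℝ^m satisfy Σ_{i=1}^n (A_i x_{i,k₀} + δ_{i,k₀} − d_i) ⪯ C. Then for every integer t ≥ 0 with (1−γ)^{t+1}·C ⪯ n ω_{k₀+t}·1_m, the violation remains zero thereafter: Σ_{i=1}^n A_i x_{i,k} ⪯ Σ_{i=1}^n d_i componentwise for all k ≥ k₀ + t + 1. -/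
set_option autoImplicit false

open scoped BigOperators

noncomputable section

/-- Theorem 2, part ii: for `γ ∈ (0,1)` and buffers `ω_k > 0`
with `ω_{k+1} ≥ (1−γ)ω_k`, sequences satisfying the DanyRA decision-update
constraint and `δ_{k+1} ⪰ ω_k·1`, if the aggregate at `k₀ ≥ 1` is bounded by
`C ∈ ℝ^m`, then for every `t` with `(1−γ)^{t+1}·C ⪯ n ω_{k₀+t}·1` the
violation remains zero thereafter:
`∑ᵢ Aᵢ x_{i,k} ⪯ ∑ᵢ dᵢ` componentwise for all `k ≥ k₀ + t + 1`. -/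
theorem stmt_13 {n m p : ℕ} (hn : 1 ≤ n)
    (A : Fin n → Matrix (Fin m) (Fin p) ℝ)
    (d : EuclideanSpace ℝ (Fin n × Fin m))
    (L : Matrix (Fin n) (Fin n) ℝ)
    (hLsym : L.IsSymm)
    (hLrow : ∀ i, ∑ j, L i j = 0)
    (hLcol : ∀ j, ∑ i, L i j = 0)
    (γ : ℝ) (hγ0 : 0 < γ) (hγ1 : γ < 1)
    (ω : ℕ → ℝ) (hω : ∀ k, 0 < ω k)
    (hωdec : ∀ k, (1 - γ) * ω k ≤ ω (k + 1))
    (x : ℕ → EuclideanSpace ℝ (Fin n × Fin p))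
    (y δ : ℕ → EuclideanSpace ℝ (Fin n × Fin m))
    (hrec : ∀ k : ℕ, Amul A (x (k + 1)) =
      Amul A (x k) - γ • (Amul A (x k) + Lmul L (y (k + 1)) + δ (k + 1) - d)
        + (1 - γ) • (δ k - δ (k + 1)))
    (hδω : ∀ k : ℕ, ∀ q, ω k ≤ δ (k + 1) q)
    (k₀ : ℕ) (hk₀ : 1 ≤ k₀)
    (C : Fin m → ℝ)
    (hC : ∀ j : Fin m,
      (∑ i : Fin n, (Amul A (x k₀) (i, j) + δ k₀ (i, j) - d (i, j))) ≤ C j) :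
    ∀ t : ℕ, (∀ j : Fin m, (1 - γ) ^ (t + 1) * C j ≤ n * ω (k₀ + t)) →
      ∀ k : ℕ, k₀ + t + 1 ≤ k → ∀ j : Fin m,
        (∑ i : Fin n, Amul A (x k) (i, j)) ≤ ∑ i : Fin n, d (i, j) := by

  have h1γ : (0:ℝ) < 1 - γ := by linarith
  set S : ℕ → Fin m → ℝ :=
    fun k j => ∑ i : Fin n, (Amul A (x k) (i, j) + δ k (i, j) - d (i, j)) with hS
  have hstep : ∀ k j, S (k + 1) j = (1 - γ) * S k j := by
    intro k j
    have hLsum : ∑ i : Fin n, Lmul L (y (k + 1)) (i, j) = 0 := by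
      simp only [Lmul]
      rw [Finset.sum_comm]
      have : ∀ l : Fin n, ∑ i : Fin n, L i l * y (k + 1) (l, j)
          = (∑ i : Fin n, L i l) * y (k + 1) (l, j) := by
        intro l; rw [Finset.sum_mul]
      simp only [this, hLcol, zero_mul, Finset.sum_const_zero]
    have hx : ∀ i : Fin n,
        Amul A (x (k + 1)) (i, j) + δ (k + 1) (i, j) - d (i, j)
          = (1 - γ) * (Amul A (x k) (i, j) + δ k (i, j) - d (i, j))
            - γ * Lmul L (y (k + 1)) (i, j) := by
      intro i
      have h := congrArg (fun v : EuclideanSpace ℝ (Fin n × Fin m) => v (i, j)) (hrec k)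
      simp only [PiLp.add_apply, PiLp.sub_apply, PiLp.smul_apply, smul_eq_mul] at h
      rw [h]; ring
    calc S (k + 1) j
        = ∑ i : Fin n, ((1 - γ) * (Amul A (x k) (i, j) + δ k (i, j) - d (i, j))
            - γ * Lmul L (y (k + 1)) (i, j)) := by
          simp only [hS]; exact Finset.sum_congr rfl fun i _ => hx i
      _ = (1 - γ) * S k j := by
          rw [Finset.sum_sub_distrib, ← Finset.mul_sum, ← Finset.mul_sum, hLsum]
          simp [hS]
  intro t ht k hk j
  have hSiter : ∀ r : ℕ, S (k₀ + r) j ≤ (1 - γ) ^ r * C j := by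
    intro r
    induction r with
    | zero => simpa only [Nat.add_zero, pow_zero, one_mul] using hC j
    | succ r ih =>
      have : S (k₀ + (r + 1)) j = (1 - γ) * S (k₀ + r) j := hstep (k₀ + r) j
      rw [this, pow_succ]
      calc (1 - γ) * S (k₀ + r) j ≤ (1 - γ) * ((1 - γ) ^ r * C j) :=
            mul_le_mul_of_nonneg_left ih (le_of_lt h1γ)
        _ = (1 - γ) ^ r * (1 - γ) * C j := by ring
  have hbound : ∀ r : ℕ, (1 - γ) ^ (t + 1 + r) * C j ≤ n * ω (k₀ + t + r) := by
    intro r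
    induction r with
    | zero => simpa using ht j
    | succ r ih =>
      have hn0 : (0:ℝ) ≤ n := by positivity
      have h2 : (1 - γ) * ((1 - γ) ^ (t + 1 + r) * C j)
          ≤ (1 - γ) * (n * ω (k₀ + t + r)) :=
        mul_le_mul_of_nonneg_left ih (le_of_lt h1γ)
      have h3 : (n:ℝ) * ((1 - γ) * ω (k₀ + t + r)) ≤ n * ω (k₀ + t + r + 1) :=
        mul_le_mul_of_nonneg_left (hωdec (k₀ + t + r)) hn0
      have heq : (1 - γ) ^ (t + 1 + (r + 1)) * C j
          = (1 - γ) * ((1 - γ) ^ (t + 1 + r) * C j) := by ring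
      rw [heq]
      calc (1 - γ) * ((1 - γ) ^ (t + 1 + r) * C j)
          ≤ (1 - γ) * (n * ω (k₀ + t + r)) := h2
        _ = (n:ℝ) * ((1 - γ) * ω (k₀ + t + r)) := by ring
        _ ≤ n * ω (k₀ + t + r + 1) := h3
        _ = n * ω (k₀ + t + (r + 1)) := by ring_nf
  obtain ⟨r, rfl⟩ : ∃ r, k = k₀ + t + 1 + r := ⟨k - (k₀ + t + 1), by omega⟩
  have hk' : k₀ + t + 1 + r = k₀ + (t + 1 + r) := by omega
  have hSk : S (k₀ + t + 1 + r) j ≤ (n:ℝ) * ω (k₀ + t + r) := by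
    calc S (k₀ + t + 1 + r) j ≤ (1 - γ) ^ (t + 1 + r) * C j := by
          rw [hk']; exact hSiter (t + 1 + r)
      _ ≤ n * ω (k₀ + t + r) := hbound r
  have hδsum : (n:ℝ) * ω (k₀ + t + r) ≤ ∑ i : Fin n, δ (k₀ + t + 1 + r) (i, j) := by
    have heq : k₀ + t + 1 + r = (k₀ + t + r) + 1 := by omega
    calc (n:ℝ) * ω (k₀ + t + r) = ∑ _i : Fin n, ω (k₀ + t + r) := by
          simp [Finset.sum_const, mul_comm]
      _ ≤ ∑ i : Fin n, δ (k₀ + t + 1 + r) (i, j) := by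
          refine Finset.sum_le_sum fun i _ => ?_
          rw [heq]; exact hδω (k₀ + t + r) (i, j)
  have hSeq : S (k₀ + t + 1 + r) j
      = (∑ i : Fin n, Amul A (x (k₀ + t + 1 + r)) (i, j))
        + (∑ i : Fin n, δ (k₀ + t + 1 + r) (i, j))
        - ∑ i : Fin n, d (i, j) := by
    simp only [hS]
    rw [Finset.sum_sub_distrib, Finset.sum_add_distrib]
  linarith [hSk, hδsum, hSeq.symm.le, hSeq.le]
end
end

section
/- (Proposition 4) Let (x̂′, ŷ, λ̂, x̂) be a fixed point of the Eq-DanyRA updates with stepsizes α, β, η, γ > 0 (in particular η > 0 and γ > 0). Then x̂ = x̂′ and the KKT conditions of the equality-reformulated problem hold: ∇f(x̂) + Aᵀλ̂ = 0, 𝐋λ̂ = 0, and A x̂ + 𝐋 ŷ − d = 0. -/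
set_option autoImplicit false

open scoped BigOperators

noncomputable section

lemma adjsum {n m p : ℕ} (A : Fin n → Matrix (Fin m) (Fin p) ℝ)
    (x : EuclideanSpace ℝ (Fin n × Fin p)) (v : EuclideanSpace ℝ (Fin n × Fin m)) :
    ∑ q : Fin n × Fin m, Amul A x q * v q = ∑ q : Fin n × Fin p, x q * ATmul A v q := by
  simp only [Amul, ATmul, PiLp.toLp_apply, Finset.sum_mul, Finset.mul_sum]
  rw [Fintype.sum_prod_type, Fintype.sum_prod_type]
  refine Finset.sum_congr rfl fun i _ => ?_
  rw [Finset.sum_comm]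
  exact Finset.sum_congr rfl fun j _ => Finset.sum_congr rfl fun k _ => by ring

lemma key_zero {n m p : ℕ} (A : Fin n → Matrix (Fin m) (Fin p) ℝ) {η : ℝ} (hη : 0 < η)
    (w : EuclideanSpace ℝ (Fin n × Fin m))
    (hw : w = (-η) • Amul A (ATmul A w)) : w = 0 := by
  have h1 : ∑ q : Fin n × Fin m, w q * w q
      = -η * ∑ q : Fin n × Fin p, ATmul A w q * ATmul A w q := by
    calc ∑ q : Fin n × Fin m, w q * w q
        = ∑ q : Fin n × Fin m, ((-η) • Amul A (ATmul A w)) q * w q := by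
          rw [← hw]
      _ = -η * ∑ q : Fin n × Fin m, Amul A (ATmul A w) q * w q := by
          simp [PiLp.smul_apply, smul_eq_mul, Finset.mul_sum, mul_assoc]
      _ = -η * ∑ q : Fin n × Fin p, ATmul A w q * ATmul A w q := by
          rw [adjsum]
  have hS : (0:ℝ) ≤ ∑ q : Fin n × Fin p, ATmul A w q * ATmul A w q :=
    Finset.sum_nonneg fun q _ => mul_self_nonneg _
  have hW : (0:ℝ) ≤ ∑ q : Fin n × Fin m, w q * w q :=
    Finset.sum_nonneg fun q _ => mul_self_nonneg _
  have hWz : ∑ q : Fin n × Fin m, w q * w q = 0 := by nlinarith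
  ext q
  have := (Finset.sum_eq_zero_iff_of_nonneg
    (fun q _ => mul_self_nonneg (w q))).mp hWz q (Finset.mem_univ q)
  have := mul_self_eq_zero.mp this
  simpa using this

/-- Proposition 4: any fixed point `(x̂′, ŷ, λ̂, x̂)` of the
Eq-DanyRA updates with stepsizes `α, β, η, γ > 0` satisfies `x̂ = x̂′` and the
KKT conditions of the equality-reformulated problem: `∇f(x̂) + Aᵀλ̂ = 0`,
`𝐋λ̂ = 0`, and `A x̂ + 𝐋 ŷ − d = 0`. -/
theorem stmt_15 {n m p : ℕ} (hn : 1 ≤ n) (hpm : m ≤ p)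
    (f : Fin n → EuclideanSpace ℝ (Fin p) → ℝ)
    (hdiff : ∀ i, Differentiable ℝ (f i))
    (hconv : ∀ i, ConvexOn ℝ Set.univ (f i))
    (A : Fin n → Matrix (Fin m) (Fin p) ℝ)
    (hArank : ∀ i, (A i).rank = m)
    (d : EuclideanSpace ℝ (Fin n × Fin m))
    (L : Matrix (Fin n) (Fin n) ℝ)
    (hLsym : L.IsSymm)
    (hLpsd : L.PosSemidef)
    (hLker : ∀ v : Fin n → ℝ, L.mulVec v = 0 ↔ ∃ c : ℝ, v = fun _ => c)
    (α β η γ : ℝ) (hα : 0 < α) (hβ : 0 < β) (hη : 0 < η) (hγ : 0 < γ)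
    -- the fixed point, with `gradF` the gradient of the stacked objective
    (xhat' xhat : EuclideanSpace ℝ (Fin n × Fin p))
    (yhat lamhat : EuclideanSpace ℝ (Fin n × Fin m))
    (gradF : EuclideanSpace ℝ (Fin n × Fin p) → EuclideanSpace ℝ (Fin n × Fin p))
    (hgradF : gradF = gradient (stackF f))
    (zhat : EuclideanSpace ℝ (Fin n × Fin m))
    (hzhat : zhat = Amul A xhat' + Lmul L yhat)
    -- fixed-point conditions of the Eq-DanyRA updates:
    (hfix1 : gradF xhat' + ATmul A (zhat - d + lamhat) = 0)
    (hfix2 : Lmul L (zhat - d + lamhat) = 0)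
    (hfix3 : zhat - d = η • Amul A (ATmul A lamhat + gradF xhat'))
    (hfix4mem : Amul A xhat =
      Amul A xhat - γ • (Amul A xhat + Lmul L yhat - d))
    (hfix4min : ∀ x : EuclideanSpace ℝ (Fin n × Fin p),
      Amul A x = Amul A xhat - γ • (Amul A xhat + Lmul L yhat - d) →
      ‖xhat - xhat'‖ ≤ ‖x - xhat'‖) :
    xhat = xhat' ∧
    gradF xhat + ATmul A lamhat = 0 ∧
    Lmul L lamhat = 0 ∧
    Amul A xhat + Lmul L yhat - d = 0 := by

  -- From hfix4mem: the constraint at xhat holds.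
  have hcon : Amul A xhat + Lmul L yhat - d = 0 := by
    have h := hfix4mem.symm
    have hsm : γ • (Amul A xhat + Lmul L yhat - d) = 0 := sub_eq_self.mp h
    rcases smul_eq_zero.mp hsm with h' | h'
    · exact absurd h' (ne_of_gt hγ)
    · exact h'
  -- Express gradF xhat' from hfix1.
  have hgrad : gradF xhat' = -(ATmul A (zhat - d + lamhat)) :=
    eq_neg_of_add_eq_zero_left hfix1
  -- Key: zhat - d = -η • A Aᵀ (zhat - d)
  have hATc : ATmul A lamhat + gradF xhat' = -(ATmul A (zhat - d)) := by
    rw [hgrad]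
    ext q
    simp only [ATmul, PiLp.toLp_apply, PiLp.add_apply, PiLp.neg_apply, PiLp.sub_apply,
      ← Finset.sum_add_distrib, ← Finset.sum_neg_distrib]
    exact Finset.sum_congr rfl fun j _ => by ring
  have hw : zhat - d = (-η) • Amul A (ATmul A (zhat - d)) := by
    have h := hfix3
    rw [hATc] at h
    refine h.trans ?_
    ext q
    simp only [Amul, PiLp.toLp_apply, PiLp.smul_apply, PiLp.neg_apply, smul_eq_mul,
      Finset.mul_sum, ← Finset.sum_neg_distrib]
    exact Finset.sum_congr rfl fun k _ => by ring
  have hw0 : zhat - d = 0 := key_zero A hη _ hw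
  rw [hw0, zero_add] at hfix1 hfix2
  -- constraint at xhat'
  have hcon' : Amul A xhat' + Lmul L yhat - d = 0 := by
    rw [hzhat] at hw0; exact hw0
  have hAeq : Amul A xhat' = Amul A xhat := by
    have h1 : Amul A xhat' + Lmul L yhat = Amul A xhat + Lmul L yhat := by
      have := sub_eq_zero.mp hcon'
      have h2 := sub_eq_zero.mp hcon
      rw [this, h2]
    exact add_right_cancel h1
  have hxx : xhat = xhat' := by
    have hmem : Amul A xhat' = Amul A xhat - γ • (Amul A xhat + Lmul L yhat - d) := by
      rw [hcon, smul_zero, sub_zero]; exact hAeq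
    have := hfix4min xhat' hmem
    rw [sub_self, norm_zero] at this
    have := le_antisymm this (norm_nonneg _)
    exact sub_eq_zero.mp (norm_eq_zero.mp this)
  refine ⟨hxx, ?_, hfix2, hcon⟩
  rw [hxx]; exact hfix1
end
end

section
/- (Theorem 3, part ii) Let γ ∈ (0,1) and consider sequences x_k ∈ ℝ^{np}, y_k ∈ ℝ^{nm} satisfying, for every k ≥ 0, A x_{k+1} = A x_k − γ(A x_k + 𝐋 y_{k+1} − d) (the affine constraint of Eq-DanyRA's decision update). Then for all k ≥ 0, Σ_{i=1}^n (A_i x_{i,k+1} − d_i) = (1−γ)·Σ_{i=1}^n (A_i x_{i,k} − d_i) in ℝ^m. Consequently, if the coupled equality constraint is violated at some k₀ ≥ 1 with violation C^vio = |Σ_{i=1}^n (A_i x_{i,k₀} − d_i)| (componentwise absolute value), then the violation decays linearly: |Σ_{i=1}^n (A_i x_{i,k₀+t} − d_i)| = (1−γ)^t C^vio ⪯ (1−γ)^t C^vio for all t ≥ 1, and in particular Σ_{i=1}^n (A_i x_{i,k₀+t} − d_i) ⪯ (1−γ)^t C^vio componentwise. -/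
set_option autoImplicit false

open scoped BigOperators

noncomputable section

/-- Theorem 3, part ii: under the Eq-DanyRA decision-update
constraint `A x_{k+1} = A x_k − γ(A x_k + 𝐋 y_{k+1} − d)` with `γ ∈ (0,1)`, the
aggregate residual contracts exactly:
`∑ᵢ (Aᵢ x_{i,k+1} − dᵢ) = (1−γ)·∑ᵢ (Aᵢ x_{i,k} − dᵢ)`; consequently, for a
violation at `k₀ ≥ 1` with componentwise magnitude
`C^vio = |∑ᵢ (Aᵢ x_{i,k₀} − dᵢ)|`, one has
`|∑ᵢ (Aᵢ x_{i,k₀+t} − dᵢ)| = (1−γ)^t C^vio` and in particular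
`∑ᵢ (Aᵢ x_{i,k₀+t} − dᵢ) ⪯ (1−γ)^t C^vio` componentwise, for all `t ≥ 1`. -/
theorem stmt_18 {n m p : ℕ} (hn : 1 ≤ n)
    (A : Fin n → Matrix (Fin m) (Fin p) ℝ)
    (d : EuclideanSpace ℝ (Fin n × Fin m))
    (L : Matrix (Fin n) (Fin n) ℝ)
    (hLsym : L.IsSymm)
    (hLrow : ∀ i, ∑ j, L i j = 0)
    (hLcol : ∀ j, ∑ i, L i j = 0)
    (γ : ℝ) (hγ0 : 0 < γ) (hγ1 : γ < 1)
    (x : ℕ → EuclideanSpace ℝ (Fin n × Fin p))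
    (y : ℕ → EuclideanSpace ℝ (Fin n × Fin m))
    (hrec : ∀ k : ℕ, Amul A (x (k + 1)) =
      Amul A (x k) - γ • (Amul A (x k) + Lmul L (y (k + 1)) - d)) :
    (∀ (k : ℕ) (j : Fin m),
      (∑ i : Fin n, (Amul A (x (k + 1)) (i, j) - d (i, j)))
        = (1 - γ) * ∑ i : Fin n, (Amul A (x k) (i, j) - d (i, j))) ∧
    (∀ k₀ : ℕ, 1 ≤ k₀ → ∀ t : ℕ, 1 ≤ t → ∀ j : Fin m,
      |∑ i : Fin n, (Amul A (x (k₀ + t)) (i, j) - d (i, j))|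
        = (1 - γ) ^ t * |∑ i : Fin n, (Amul A (x k₀) (i, j) - d (i, j))| ∧
      (∑ i : Fin n, (Amul A (x (k₀ + t)) (i, j) - d (i, j)))
        ≤ (1 - γ) ^ t * |∑ i : Fin n, (Amul A (x k₀) (i, j) - d (i, j))|) := by
  have key : ∀ (k : ℕ) (j : Fin m),
      (∑ i : Fin n, (Amul A (x (k + 1)) (i, j) - d (i, j)))
        = (1 - γ) * ∑ i : Fin n, (Amul A (x k) (i, j) - d (i, j)) := by
    intro k j
    have hL : ∑ i : Fin n, Lmul L (y (k + 1)) (i, j) = 0 := by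
      simp only [Lmul, PiLp.toLp_apply]
      rw [Finset.sum_comm]
      simp [← Finset.sum_mul, hLcol]
    have h : ∀ i : Fin n, Amul A (x (k + 1)) (i, j)
        = Amul A (x k) (i, j) - γ * (Amul A (x k) (i, j) + Lmul L (y (k + 1)) (i, j) - d (i, j)) := by
      intro i
      have := congrArg (fun v => v (i, j)) (hrec k)
      simpa using this
    calc ∑ i : Fin n, (Amul A (x (k + 1)) (i, j) - d (i, j))
        = ∑ i : Fin n, ((1 - γ) * (Amul A (x k) (i, j) - d (i, j))
            - γ * Lmul L (y (k + 1)) (i, j)) := by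
          apply Finset.sum_congr rfl
          intro i _
          rw [h i]; ring
      _ = (1 - γ) * ∑ i : Fin n, (Amul A (x k) (i, j) - d (i, j)) := by
          rw [Finset.sum_sub_distrib, ← Finset.mul_sum, ← Finset.mul_sum, hL]
          ring
  refine ⟨key, ?_⟩
  intro k₀ _ t _ j
  have hiter : ∀ t : ℕ, (∑ i : Fin n, (Amul A (x (k₀ + t)) (i, j) - d (i, j)))
      = (1 - γ) ^ t * ∑ i : Fin n, (Amul A (x k₀) (i, j) - d (i, j)) := by
    intro t
    induction t with
    | zero => simp
    | succ s ih =>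
        have := key (k₀ + s) j
        rw [show k₀ + (s + 1) = (k₀ + s) + 1 by ring, this, ih, pow_succ]
        ring
  have hpos : (0:ℝ) ≤ (1 - γ) ^ t := pow_nonneg (by linarith) t
  constructor
  · rw [hiter t, abs_mul, abs_of_nonneg hpos]
  · rw [hiter t]
    calc (1 - γ) ^ t * ∑ i : Fin n, (Amul A (x k₀) (i, j) - d (i, j))
        ≤ (1 - γ) ^ t * |∑ i : Fin n, (Amul A (x k₀) (i, j) - d (i, j))| := by
          exact mul_le_mul_of_nonneg_left (le_abs_self _) hpos
end
end
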